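/- Let E be a real normed vector space, let V, V′, W, W′ : E → E be vector fields that are differentiable at a point u ∈ E, and let S ⊆ E be a set containing u on which V = V′ and W = W′. Suppose there are curves γ, δ : ℝ → E, differentiable at 0, with γ(0) = δ(0) = u, γ′(0) = V(u), δ′(0) = W(u), whose images near 0 are contained in S. Then the Lie brackets of the vector fields agree at u: [V, W](u) = [V′, W′](u). -/
import Mathlib


open Set Filter

/-- Two pairs of vector fields that agree on a set `S` containing curves through `u`
in the directions `V u` and `W u` have the same Lie bracket
`[V, W](u) = DW(u)(V(u)) − DV(u)(W(u))` at `u`. -/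
theorem lie_bracket_eq_of_eqOn
    {E : Type*} [NormedAddCommGroup E] [NormedSpace ℝ E]
    (V V' W W' : E → E) (u : E) (S : Set E) (hu : u ∈ S)
    (hV : DifferentiableAt ℝ V u) (hV' : DifferentiableAt ℝ V' u)
    (hW : DifferentiableAt ℝ W u) (hW' : DifferentiableAt ℝ W' u)
    (hVV' : Set.EqOn V V' S) (hWW' : Set.EqOn W W' S)
    (γ δ : ℝ → E) (hγ0 : γ 0 = u) (hδ0 : δ 0 = u)
    (hγd : HasDerivAt γ (V u) 0) (hδd : HasDerivAt δ (W u) 0)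
    (hγS : ∀ᶠ t in nhds (0 : ℝ), γ t ∈ S)
    (hδS : ∀ᶠ t in nhds (0 : ℝ), δ t ∈ S) :
    fderiv ℝ W u (V u) - fderiv ℝ V u (W u) =
      fderiv ℝ W' u (V' u) - fderiv ℝ V' u (W' u) := by
  have key : ∀ (A A' : E → E), DifferentiableAt ℝ A u → DifferentiableAt ℝ A' u →
      Set.EqOn A A' S → ∀ (c : ℝ → E) (v : E), c 0 = u → HasDerivAt c v 0 →
      (∀ᶠ t in nhds (0 : ℝ), c t ∈ S) → fderiv ℝ A u v = fderiv ℝ A' u v := by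
    intro A A' hA hA' hAA' c v hc0 hcd hcS
    have hA1 : HasFDerivAt A (fderiv ℝ A u) (c 0) := hc0 ▸ hA.hasFDerivAt
    have hA1' : HasFDerivAt A' (fderiv ℝ A' u) (c 0) := hc0 ▸ hA'.hasFDerivAt
    have h1 : HasDerivAt (A ∘ c) (fderiv ℝ A u v) 0 := hA1.comp_hasDerivAt 0 hcd
    have h2 : HasDerivAt (A' ∘ c) (fderiv ℝ A' u v) 0 := hA1'.comp_hasDerivAt 0 hcd
    have heq : (A ∘ c) =ᶠ[nhds (0 : ℝ)] (A' ∘ c) :=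
      hcS.mono fun t ht => hAA' ht
    exact ((h2.congr_of_eventuallyEq heq).unique h1).symm
  have e1 : fderiv ℝ W u (V u) = fderiv ℝ W' u (V u) :=
    key W W' hW hW' hWW' γ (V u) hγ0 hγd hγS
  have e2 : fderiv ℝ V u (W u) = fderiv ℝ V' u (W u) :=
    key V V' hV hV' hVV' δ (W u) hδ0 hδd hδS
  rw [e1, e2, hVV' hu, hWW' hu]
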